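/- Let h : X → Y be a flip conjugacy between Smale spaces (X,φ) and (Y,ψ), and define η : X×X → Y×Y by η(x,z) = (h(x),h(z)). Then for every N ∈ ℕ there exists N' ∈ ℕ such that η(G_φ^{a,N}) ⊆ G_ψ^{a,N'} and η(G_φ^{a,N}) is an open subset of G_ψ^{a,N'} in the subspace topology that G_ψ^{a,N'} inherits from Y×Y. In particular η(G_φ^a) ⊆ G_ψ^a. -/

import Mathlib

open Filter Set Topology

noncomputable section

/-- Integer iterate of a homeomorphism. -/
def hIter {X : Type*} [TopologicalSpace X] (φ : X ≃ₜ X) (n : ℤ) (x : X) : X :=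
  ((φ.toEquiv : Equiv.Perm X) ^ n) x

/-- The cocycle sums `f^n` of a function `f : X → ℤ` along the iterates of `φ`:
`f^n(x) = Σ_{i=0}^{n-1} f(φ^i(x))` for `n > 0`, `f^0 = 0`, and
`f^n(x) = −Σ_{i=n}^{-1} f(φ^i(x))` for `n < 0`. -/
def cSum {X : Type*} [TopologicalSpace X] (φ : X ≃ₜ X) (f : X → ℤ) (n : ℤ) (x : X) : ℤ :=
  if 0 ≤ n then ∑ i ∈ Finset.range n.toNat, f (hIter φ i x)
  else -∑ i ∈ Finset.range (-n).toNat, f (hIter φ (n + i) x)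

/-- Stable asymptotic pairs (limit definition). -/
def asympS {X : Type*} [MetricSpace X] (φ : X ≃ₜ X) : Set (X × X) :=
  {p | Tendsto (fun n : ℕ => dist (hIter φ n p.1) (hIter φ n p.2)) atTop (nhds 0)}

/-- Unstable asymptotic pairs (limit definition). -/
def asympU {X : Type*} [MetricSpace X] (φ : X ≃ₜ X) : Set (X × X) :=
  {p | Tendsto (fun n : ℕ => dist (hIter φ (-(n : ℤ)) p.1) (hIter φ (-(n : ℤ)) p.2))
    atTop (nhds 0)}

/-- Asymptotic pairs (limit definition). -/
def asympA {X : Type*} [MetricSpace X] (φ : X ≃ₜ X) : Set (X × X) := asympS φ ∩ asympU φ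

/-- The `ω`-limit set of `x`. -/
def omegaSet {X : Type*} [MetricSpace X] (φ : X ≃ₜ X) (x : X) : Set X :=
  {z | ∃ n : ℕ → ℕ, StrictMono n ∧ Tendsto (fun i => hIter φ (n i) x) atTop (nhds z)}

/-- The `α`-limit set of `x`. -/
def alphaSet {X : Type*} [MetricSpace X] (φ : X ≃ₜ X) (x : X) : Set X :=
  {z | ∃ n : ℕ → ℤ, StrictAnti n ∧ Tendsto (fun i => hIter φ (n i) x) atTop (nhds z)}

/-- A Smale space structure on a compact metric space `X`. -/
structure SmaleSpace (X : Type*) [MetricSpace X] [CompactSpace X] where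
  phi : X ≃ₜ X
  eps : ℝ
  lam : ℝ
  br : X → X → X
  eps_pos : 0 < eps
  lam_pos : 0 < lam
  lam_lt_one : lam < 1
  br_cont : ContinuousOn (fun p : X × X => br p.1 p.2) {p : X × X | dist p.1 p.2 < eps}
  br_self : ∀ x : X, br x x = x
  br_assoc_left : ∀ x y z : X, dist x y < eps → dist (br x y) z < eps → dist x z < eps →
    br (br x y) z = br x z
  br_assoc_right : ∀ x y z : X, dist y z < eps → dist x (br y z) < eps → dist x z < eps →
    br x (br y z) = br x z
  phi_br : ∀ x y : X, dist x y < eps → dist (phi x) (phi y) < eps →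
    phi (br x y) = br (phi x) (phi y)
  contract_s : ∀ x y z : X, br y x = y → dist x y < eps → br z x = z → dist x z < eps →
    dist (phi y) (phi z) ≤ lam * dist y z
  contract_u : ∀ x y z : X, br x y = y → dist x y < eps → br x z = z → dist x z < eps →
    dist (phi.symm y) (phi.symm z) ≤ lam * dist y z

namespace SmaleSpace

variable {X Y : Type*} [MetricSpace X] [CompactSpace X] [MetricSpace Y] [CompactSpace Y]

/-- Local stable set `X^s(x,ε)`. -/
def Xs (S : SmaleSpace X) (x : X) (ε : ℝ) : Set X := {y | S.br y x = y ∧ dist x y < ε}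

/-- Local unstable set `X^u(x,ε)`. -/
def Xu (S : SmaleSpace X) (x : X) (ε : ℝ) : Set X := {y | S.br x y = y ∧ dist x y < ε}

def Gs0 (S : SmaleSpace X) : Set (X × X) := {p | p.2 ∈ S.Xs p.1 S.eps}

def Gu0 (S : SmaleSpace X) : Set (X × X) := {p | p.2 ∈ S.Xu p.1 S.eps}

/-- `G_φ^{s,n} = (φ×φ)^{-n}(G_φ^{s,0})`. -/
def GsN (S : SmaleSpace X) (n : ℤ) : Set (X × X) :=
  {p | (hIter S.phi n p.1, hIter S.phi n p.2) ∈ S.Gs0}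

/-- `G_φ^{u,n} = (φ×φ)^{n}(G_φ^{u,0})`. -/
def GuN (S : SmaleSpace X) (n : ℤ) : Set (X × X) :=
  {p | (hIter S.phi (-n) p.1, hIter S.phi (-n) p.2) ∈ S.Gu0}

def GaN (S : SmaleSpace X) (n : ℤ) : Set (X × X) := S.GsN n ∩ S.GuN n

/-- The asymptotic equivalence relation `G_φ^a = ⋃_{n ≥ 0} G_φ^{a,n}`. -/
def Ga (S : SmaleSpace X) : Set (X × X) := ⋃ n : ℕ, S.GaN n

lemma gaN_subset_ga (S : SmaleSpace X) (n : ℕ) : S.GaN n ⊆ S.Ga :=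
  Set.subset_iUnion (fun k : ℕ => S.GaN k) n

/-- The inductive limit topology on `G_φ^a`: a set is open iff its intersection with each
`G_φ^{a,n}` is open in the subspace topology from `X × X`. -/
def gaTopology (S : SmaleSpace X) : TopologicalSpace ↥S.Ga :=
  ⨆ n : ℕ, TopologicalSpace.coinduced (Set.inclusion (S.gaN_subset_ga n)) inferInstance

/-- Irreducibility of a Smale space. -/
def Irreducible (S : SmaleSpace X) : Prop :=
  ∀ U V : Set X, IsOpen U → U.Nonempty → IsOpen V → V.Nonempty →
    ∃ K : ℕ, ((hIter S.phi K '' U) ∩ V).Nonempty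

def IsPeriodicPoint (S : SmaleSpace X) (x : X) : Prop :=
  ∃ p : ℕ, 0 < p ∧ hIter S.phi p x = x

/-- `h` is a flip conjugacy between `(X,φ)` and `(Y,ψ)`. -/
def IsFlipConjugacy (S : SmaleSpace X) (T : SmaleSpace Y) (h : X ≃ₜ Y) : Prop :=
  (∀ x, h (S.phi x) = T.phi (h x)) ∨ (∀ x, h (S.phi x) = T.phi.symm (h x))

def FlipConjugate (S : SmaleSpace X) (T : SmaleSpace Y) : Prop :=
  ∃ h : X ≃ₜ Y, IsFlipConjugacy S T h

/-- An isomorphism of the principal étale groupoids `G_φ^a` and `G_ψ^a`: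
a bijection which is a homeomorphism for the inductive limit topologies and preserves
the (equivalence relation) groupoid structure. -/
structure GaIso (S : SmaleSpace X) (T : SmaleSpace Y) where
  toEquiv : ↥S.Ga ≃ ↥T.Ga
  cont : @Continuous _ _ S.gaTopology T.gaTopology toEquiv
  cont_symm : @Continuous _ _ T.gaTopology S.gaTopology toEquiv.symm
  map_mul : ∀ p q r : ↥S.Ga, (p : X × X).2 = (q : X × X).1 →
    (r : X × X) = ((p : X × X).1, (q : X × X).2) →
    (toEquiv p : Y × Y).2 = (toEquiv q : Y × Y).1 ∧
      (toEquiv r : Y × Y) = ((toEquiv p : Y × Y).1, (toEquiv q : Y × Y).2)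

end SmaleSpace


section hIterLemmas

variable {X : Type*} [TopologicalSpace X] (φ : X ≃ₜ X)

lemma hIter_zero (x : X) : hIter φ 0 x = x := rfl

lemma hIter_add (m n : ℤ) (x : X) : hIter φ (m + n) x = hIter φ m (hIter φ n x) := by
  simp [hIter, zpow_add, Equiv.Perm.mul_apply]

lemma hIter_comp (m n : ℤ) (x : X) : hIter φ m (hIter φ n x) = hIter φ (m + n) x :=
  (hIter_add φ m n x).symm

lemma hIter_one (x : X) : hIter φ 1 x = φ x := by simp [hIter]

lemma hIter_neg_one (x : X) : hIter φ (-1) x = φ.symm x := by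
  simp [hIter, zpow_neg]

lemma hIter_succ (n : ℤ) (x : X) : hIter φ (n + 1) x = φ (hIter φ n x) := by
  rw [add_comm, hIter_add, hIter_one]

lemma hIter_symm (n : ℤ) (x : X) : hIter φ.symm n x = hIter φ (-n) x := by
  have : (φ.symm.toEquiv : Equiv.Perm X) = (φ.toEquiv : Equiv.Perm X)⁻¹ := rfl
  simp [hIter, this, inv_zpow, zpow_neg]

lemma continuous_hIter (n : ℤ) : Continuous (hIter φ n) := by
  induction n using Int.induction_on with
  | zero => exact continuous_id
  | succ k ih =>
      have : (hIter φ (k + 1) : X → X) = φ ∘ hIter φ k := by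
        ext x; rw [hIter_succ]; rfl
      rw [this]; exact φ.continuous.comp ih
  | pred k ih =>
      have : (hIter φ (-k - 1) : X → X) = φ.symm ∘ hIter φ (-k) := by
        ext x; rw [sub_eq_add_neg, add_comm, hIter_add, hIter_neg_one]; rfl
      rw [this]; exact φ.symm.continuous.comp ih

end hIterLemmas

namespace SmaleSpace

variable {X Y : Type*} [MetricSpace X] [CompactSpace X] [MetricSpace Y] [CompactSpace Y]

/-- The time-reversed Smale space. -/
def rev (S : SmaleSpace X) : SmaleSpace X where
  phi := S.phi.symm
  eps := S.eps
  lam := S.lam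
  br x y := S.br y x
  eps_pos := S.eps_pos
  lam_pos := S.lam_pos
  lam_lt_one := S.lam_lt_one
  br_cont := by
    have hsw : ContinuousOn (Prod.swap : X × X → X × X)
        {p : X × X | dist p.1 p.2 < S.eps} := continuous_swap.continuousOn
    have := S.br_cont.comp hsw (fun p hp => by
      simpa [Prod.swap, dist_comm] using hp)
    exact this
  br_self := S.br_self
  br_assoc_left := fun x y z h1 h2 h3 =>
    S.br_assoc_right z y x (by rwa [dist_comm]) (by rwa [dist_comm]) (by rwa [dist_comm])
  br_assoc_right := fun x y z h1 h2 h3 =>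
    S.br_assoc_left z y x (by rwa [dist_comm]) (by rwa [dist_comm]) (by rwa [dist_comm])
  phi_br := by
    intro x y h1 h2
    have key := S.phi_br (S.phi.symm y) (S.phi.symm x)
      (by rwa [dist_comm] at h2) (by simpa [dist_comm] using h1)
    rw [Homeomorph.apply_symm_apply, Homeomorph.apply_symm_apply] at key
    exact S.phi.toEquiv.symm_apply_eq.mpr key.symm
  contract_s := fun x y z h1 h2 h3 h4 => S.contract_u x y z h1 h2 h3 h4
  contract_u := fun x y z h1 h2 h3 h4 => by
    simpa using S.contract_s x y z h1 h2 h3 h4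

lemma rev_Gs0 (S : SmaleSpace X) : (rev S).Gs0 = S.Gu0 := rfl

lemma rev_Gu0 (S : SmaleSpace X) : (rev S).Gu0 = S.Gs0 := rfl

lemma rev_phi (S : SmaleSpace X) : (rev S).phi = S.phi.symm := rfl

lemma rev_GsN (S : SmaleSpace X) (n : ℤ) : (rev S).GsN n = S.GuN n := by
  ext p; simp [GsN, GuN, rev_phi, hIter_symm, rev_Gs0]

lemma rev_GuN (S : SmaleSpace X) (n : ℤ) : (rev S).GuN n = S.GsN n := by
  ext p; simp [GsN, GuN, rev_phi, hIter_symm, rev_Gu0]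

lemma rev_GaN (S : SmaleSpace X) (n : ℤ) : (rev S).GaN n = S.GaN n := by
  rw [GaN, GaN, rev_GsN, rev_GuN, Set.inter_comm]

lemma mem_Gs0 (S : SmaleSpace X) {a b : X} :
    (a, b) ∈ S.Gs0 ↔ S.br b a = b ∧ dist a b < S.eps := Iff.rfl

lemma gs0_step (S : SmaleSpace X) {a b : X} (h : (a, b) ∈ S.Gs0) :
    (S.phi a, S.phi b) ∈ S.Gs0 ∧ dist (S.phi a) (S.phi b) ≤ S.lam * dist a b := by
  obtain ⟨h1, h2⟩ := S.mem_Gs0.mp h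
  have hd : dist (S.phi b) (S.phi a) ≤ S.lam * dist b a :=
    S.contract_s a b a h1 h2 (S.br_self a) (by simpa using S.eps_pos)
  have hd' : dist (S.phi a) (S.phi b) ≤ S.lam * dist a b := by
    rw [dist_comm, dist_comm a b]; exact hd
  have hlt : dist (S.phi a) (S.phi b) < S.eps := by
    nlinarith [dist_nonneg (x := a) (y := b), S.lam_pos, S.lam_lt_one]
  refine ⟨⟨?_, hlt⟩, hd'⟩
  have := S.phi_br b a (by rwa [dist_comm]) (by rwa [dist_comm])
  rw [h1] at this
  rw [← this]

lemma gs0_iter (S : SmaleSpace X) {a b : X} (h : (a, b) ∈ S.Gs0) (n : ℕ) :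
    (hIter S.phi n a, hIter S.phi n b) ∈ S.Gs0 ∧
      dist (hIter S.phi n a) (hIter S.phi n b) ≤ S.lam ^ n * dist a b := by
  induction n with
  | zero => simpa [hIter_zero] using h
  | succ k ih =>
      have e : ∀ x : X, hIter S.phi (k + 1 : ℕ) x = S.phi (hIter S.phi k x) := by
        intro x; rw [show ((k + 1 : ℕ) : ℤ) = (k : ℤ) + 1 by push_cast; ring, hIter_succ]
      rw [e a, e b]
      obtain ⟨hm, hd⟩ := S.gs0_step ih.1
      refine ⟨hm, ?_⟩
      calc dist (S.phi (hIter S.phi k a)) (S.phi (hIter S.phi k b))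
          ≤ S.lam * dist (hIter S.phi k a) (hIter S.phi k b) := hd
        _ ≤ S.lam * (S.lam ^ k * dist a b) := by
            exact mul_le_mul_of_nonneg_left ih.2 S.lam_pos.le
        _ = S.lam ^ (k + 1) * dist a b := by ring

lemma gs0_back (S : SmaleSpace X) {a b : X} (h : (S.phi a, S.phi b) ∈ S.Gs0)
    (hd : dist a b < S.eps) : (a, b) ∈ S.Gs0 := by
  obtain ⟨h1, h2⟩ := S.mem_Gs0.mp h
  refine ⟨?_, hd⟩
  have := S.phi_br b a (by rwa [dist_comm]) (by rwa [dist_comm] at h2)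
  rw [h1] at this
  exact S.phi.injective this

end SmaleSpace

namespace SmaleSpace

variable {X Y : Type*} [MetricSpace X] [CompactSpace X] [MetricSpace Y] [CompactSpace Y]

lemma br_uniform (S : SmaleSpace X) {κ : ℝ} (hκ : 0 < κ) :
    ∃ δ > 0, δ ≤ S.eps / 2 ∧ ∀ a b : X, dist a b ≤ δ → dist (S.br a b) a < κ := by
  have hK : IsCompact {p : X × X | dist p.1 p.2 ≤ S.eps / 2} :=
    (isClosed_le (by fun_prop) continuous_const).isCompact
  have hsub : {p : X × X | dist p.1 p.2 ≤ S.eps / 2} ⊆ {p : X × X | dist p.1 p.2 < S.eps} :=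
    fun p hp => lt_of_le_of_lt hp (half_lt_self S.eps_pos)
  have huc : UniformContinuousOn (fun p : X × X => S.br p.1 p.2)
      {p : X × X | dist p.1 p.2 ≤ S.eps / 2} :=
    hK.uniformContinuousOn_of_continuous (S.br_cont.mono hsub)
  rw [Metric.uniformContinuousOn_iff] at huc
  obtain ⟨δ', hδ'pos, hδ'⟩ := huc κ hκ
  refine ⟨min (δ' / 2) (S.eps / 2), lt_min (by linarith) (by linarith [S.eps_pos]), min_le_right _ _, fun a b hab => ?_⟩
  have hab2 : dist a b ≤ S.eps / 2 := hab.trans (min_le_right _ _)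
  have h1 : (a, b) ∈ {p : X × X | dist p.1 p.2 ≤ S.eps / 2} := hab2
  have h2 : (a, a) ∈ {p : X × X | dist p.1 p.2 ≤ S.eps / 2} := by
    simp only [Set.mem_setOf_eq, dist_self]; linarith [S.eps_pos]
  have hd : dist ((a, b) : X × X) (a, a) < δ' := by
    rw [Prod.dist_eq]
    have hba : dist b a < δ' := by
      rw [dist_comm]; exact lt_of_le_of_lt (hab.trans (min_le_left _ _)) (by linarith)
    simp only [dist_self]
    exact max_lt (by linarith) hba
  have := hδ' (a, b) h1 (a, a) h2 hd
  simpa [S.br_self] using this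

lemma stable_criterion (S : SmaleSpace X) :
    ∃ δ > 0, ∀ a b : X, (∀ n : ℕ, dist (hIter S.phi n a) (hIter S.phi n b) ≤ δ) →
      (a, b) ∈ S.Gs0 := by
  obtain ⟨δ0, hδ0pos, hδ0half, hδ0⟩ := S.br_uniform (κ := S.eps / 4) (by linarith [S.eps_pos])
  refine ⟨min δ0 (S.eps / 4), lt_min hδ0pos (by linarith [S.eps_pos]), fun a b hab => ?_⟩
  have heps := S.eps_pos
  have hab0 : dist a b ≤ min δ0 (S.eps / 4) := by simpa [hIter_zero] using hab 0
  have habδ : dist a b ≤ δ0 := hab0.trans (min_le_left _ _)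
  have habe4 : dist a b ≤ S.eps / 4 := hab0.trans (min_le_right _ _)
  have habe : dist a b < S.eps := by linarith
  set w := S.br a b with hw
  have hwa : dist w a < S.eps / 4 := hδ0 a b habδ
  have hwb : dist w b < S.eps / 2 := by
    calc dist w b ≤ dist w a + dist a b := dist_triangle _ _ _
      _ < S.eps / 4 + S.eps / 4 := by linarith
      _ = S.eps / 2 := by ring
  -- w ∈ Xu(a) : br a w = w
  have hau : S.br a w = w := by
    have := S.br_assoc_right a a b habe (by rw [dist_comm] at hwa; exact hwa.trans (by linarith))
      habe
    rw [this]
  -- w ∈ Xs(b) : br w b = w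
  have hws : S.br w b = w := by
    have := S.br_assoc_left a b b habe (hwb.trans (by linarith)) habe
    rw [this]
  -- forward contraction of (b, w)
  have hbw : (b, w) ∈ S.Gs0 := ⟨hws, by rw [dist_comm]; linarith⟩
  have hbwn : ∀ n : ℕ, dist (hIter S.phi n b) (hIter S.phi n w) < S.eps / 2 := by
    intro n
    have h2 := (S.gs0_iter hbw n).2
    have hl : S.lam ^ n ≤ 1 := pow_le_one₀ S.lam_pos.le S.lam_lt_one.le
    have : dist (hIter S.phi n b) (hIter S.phi n w) ≤ dist b w := by
      calc dist (hIter S.phi n b) (hIter S.phi n w) ≤ S.lam ^ n * dist b w := h2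
        _ ≤ 1 * dist b w := mul_le_mul_of_nonneg_right hl dist_nonneg
        _ = dist b w := one_mul _
    rw [dist_comm] at hwb
    linarith
  -- distance bound between φⁿ a and φⁿ w
  have hawn : ∀ n : ℕ, dist (hIter S.phi n a) (hIter S.phi n w) < S.eps := by
    intro n
    calc dist (hIter S.phi n a) (hIter S.phi n w)
        ≤ dist (hIter S.phi n a) (hIter S.phi n b) + dist (hIter S.phi n b) (hIter S.phi n w) :=
          dist_triangle _ _ _
      _ < min δ0 (S.eps / 4) + S.eps / 2 := add_lt_add_of_le_of_lt (hab n) (hbwn n)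
      _ ≤ S.eps / 4 + S.eps / 2 := by
          have := min_le_right δ0 (S.eps / 4); linarith
      _ < S.eps := by linarith
  -- bracket relation propagates forward
  have hQ : ∀ n : ℕ, S.br (hIter S.phi n a) (hIter S.phi n w) = hIter S.phi n w := by
    intro n
    induction n with
    | zero => simpa [hIter_zero] using hau
    | succ k ih =>
        have e : ∀ x : X, hIter S.phi (k + 1 : ℕ) x = S.phi (hIter S.phi k x) := by
          intro x; rw [show ((k + 1 : ℕ) : ℤ) = (k : ℤ) + 1 by push_cast; ring, hIter_succ]
        rw [e a, e w]
        have := S.phi_br (hIter S.phi k a) (hIter S.phi k w) (hawn k)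
          (by rw [← e a, ← e w]; exact hawn (k + 1))
        rw [ih] at this
        rw [← this]
  -- backward contraction for (a, w)
  have hR : ∀ n : ℕ, dist a w ≤ S.lam ^ n * dist (hIter S.phi n a) (hIter S.phi n w) := by
    intro n
    induction n with
    | zero => simp [hIter_zero]
    | succ k ih =>
        have e : ∀ x : X, hIter S.phi (k + 1 : ℕ) x = S.phi (hIter S.phi k x) := by
          intro x; rw [show ((k + 1 : ℕ) : ℤ) = (k : ℤ) + 1 by push_cast; ring, hIter_succ]
        have hc := S.contract_u (hIter S.phi (k+1) a) (hIter S.phi (k+1) a)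
          (hIter S.phi (k+1) w) (S.br_self _) (by simpa using heps)
          (by exact_mod_cast hQ (k+1)) (by exact_mod_cast hawn (k+1))
        rw [hIter_succ, hIter_succ, Homeomorph.symm_apply_apply, Homeomorph.symm_apply_apply]
          at hc
        rw [e a, e w]
        calc dist a w ≤ S.lam ^ k * dist (hIter S.phi k a) (hIter S.phi k w) := ih
          _ ≤ S.lam ^ k *
              (S.lam * dist (S.phi (hIter S.phi (k : ℤ) a)) (S.phi (hIter S.phi (k : ℤ) w))) :=
              mul_le_mul_of_nonneg_left hc (pow_nonneg S.lam_pos.le k)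
          _ = S.lam ^ (k + 1) *
              dist (S.phi (hIter S.phi (k : ℤ) a)) (S.phi (hIter S.phi (k : ℤ) w)) := by ring
  have haw : w = a := by
    have hb : ∀ n : ℕ, dist a w ≤ S.lam ^ n * S.eps := fun n =>
      (hR n).trans (mul_le_mul_of_nonneg_left (hawn n).le (pow_nonneg S.lam_pos.le n))
    have ht : Filter.Tendsto (fun n : ℕ => S.lam ^ n * S.eps) Filter.atTop (nhds 0) := by
      have := tendsto_pow_atTop_nhds_zero_of_lt_one S.lam_pos.le S.lam_lt_one
      simpa using this.mul_const S.eps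
    have h0 : dist a w ≤ 0 := ge_of_tendsto ht (Filter.Eventually.of_forall hb)
    exact (dist_le_zero.mp h0).symm
  -- conclude br b a = b
  have hba : S.br b a = b := by
    have h1 : S.br a b = a := by rw [← hw, haw]
    have := S.br_assoc_right b a b habe (by rw [h1, dist_comm]; exact habe) (by simpa using heps)
    rw [h1] at this
    rw [this, S.br_self]
  exact ⟨hba, habe⟩

end SmaleSpace

namespace SmaleSpace

variable {X Y : Type*} [MetricSpace X] [CompactSpace X] [MetricSpace Y] [CompactSpace Y]

lemma hIter_phi (S : SmaleSpace X) (n : ℤ) (x : X) :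
    hIter S.phi n (S.phi x) = hIter S.phi (n + 1) x := by
  rw [hIter_add, hIter_one]

lemma pull_back (S : SmaleSpace X) :
    ∀ (j : ℕ) (a b : X), (∀ n : ℕ, n ≤ j → dist (hIter S.phi n a) (hIter S.phi n b) < S.eps) →
      (hIter S.phi j a, hIter S.phi j b) ∈ S.Gs0 → (a, b) ∈ S.Gs0 := by
  intro j
  induction j with
  | zero => intro a b _ hm; simpa [hIter_zero] using hm
  | succ k ih =>
      intro a b hw hm
      have hstep : (S.phi a, S.phi b) ∈ S.Gs0 := by
        apply ih (S.phi a) (S.phi b)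
        · intro n hn
          rw [hIter_phi, hIter_phi]
          have := hw (n + 1) (by omega)
          rwa [show ((n + 1 : ℕ) : ℤ) = (n : ℤ) + 1 by push_cast; ring] at this
        · rw [hIter_phi, hIter_phi]
          rwa [show ((k + 1 : ℕ) : ℤ) = (k : ℤ) + 1 by push_cast; ring] at hm
      exact S.gs0_back hstep (by simpa [hIter_zero] using hw 0 (by omega))

lemma stable_criterion' (S : SmaleSpace X) :
    ∃ δ > 0, ∀ (n0 : ℕ) (a b : X),
      (∀ n : ℕ, n ≤ n0 → dist (hIter S.phi n a) (hIter S.phi n b) < S.eps) →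
      (∀ n : ℕ, n0 ≤ n → dist (hIter S.phi n a) (hIter S.phi n b) ≤ δ) →
      (a, b) ∈ S.Gs0 := by
  obtain ⟨δ, hδpos, hδ⟩ := S.stable_criterion
  refine ⟨δ, hδpos, fun n0 a b hwin htail => ?_⟩
  have hm : (hIter S.phi n0 a, hIter S.phi n0 b) ∈ S.Gs0 := by
    apply hδ
    intro n
    rw [hIter_comp, hIter_comp]
    have := htail (n + n0) (by omega)
    rwa [show ((n + n0 : ℕ) : ℤ) = (n : ℤ) + n0 by push_cast; ring] at this
  exact S.pull_back n0 a b hwin hm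

lemma gsN_mono (S : SmaleSpace X) {n m : ℕ} (h : n ≤ m) : S.GsN n ⊆ S.GsN m := by
  intro p hp
  have h1 := (S.gs0_iter hp (m - n)).1
  have e : ∀ x : X, hIter S.phi ((m - n : ℕ) : ℤ) (hIter S.phi n x) = hIter S.phi m x := by
    intro x; rw [hIter_comp]; congr 1; omega
  rwa [e, e] at h1

lemma guN_mono (S : SmaleSpace X) {n m : ℕ} (h : n ≤ m) : S.GuN n ⊆ S.GuN m := by
  rw [← S.rev_GsN, ← S.rev_GsN]
  exact (rev S).gsN_mono h

lemma gaN_mono (S : SmaleSpace X) {n m : ℕ} (h : n ≤ m) : S.GaN n ⊆ S.GaN m :=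
  Set.inter_subset_inter (S.gsN_mono h) (S.guN_mono h)

/-- Tail contraction: if `p ∈ GsN M`, then for `k ≥ 0` the distance at time `M + k`
is at most `lam ^ k * eps`. -/
lemma gsN_tail (S : SmaleSpace X) {M : ℕ} {p : X × X} (hp : p ∈ S.GsN M) (k : ℕ) :
    dist (hIter S.phi ((M : ℤ) + k) p.1) (hIter S.phi ((M : ℤ) + k) p.2) ≤
      S.lam ^ k * S.eps := by
  have h2 := (S.gs0_iter hp k).2
  have e : ∀ x : X, hIter S.phi (k : ℤ) (hIter S.phi M x) = hIter S.phi ((M : ℤ) + k) x := by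
    intro x; rw [hIter_comp]; congr 1; omega
  rw [e, e] at h2
  refine h2.trans ?_
  exact mul_le_mul_of_nonneg_left hp.2.le (pow_nonneg S.lam_pos.le k)

end SmaleSpace

namespace SmaleSpace

variable {X Y : Type*} [MetricSpace X] [CompactSpace X] [MetricSpace Y] [CompactSpace Y]

lemma conj_symm_apply (S : SmaleSpace X) (T : SmaleSpace Y) (h : X ≃ₜ Y)
    (hc : ∀ x, h (S.phi x) = T.phi (h x)) (x : X) :
    h (S.phi.symm x) = T.phi.symm (h x) := by
  apply T.phi.injective
  rw [Homeomorph.apply_symm_apply, ← hc, Homeomorph.apply_symm_apply]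

lemma conj_hIter (S : SmaleSpace X) (T : SmaleSpace Y) (h : X ≃ₜ Y)
    (hc : ∀ x, h (S.phi x) = T.phi (h x)) (n : ℤ) (x : X) :
    h (hIter S.phi n x) = hIter T.phi n (h x) := by
  induction n using Int.induction_on with
  | zero => simp [hIter_zero]
  | succ k ih => rw [hIter_succ, hIter_succ, hc, ih]
  | pred k ih =>
      rw [show (-(k : ℤ) - 1) = -1 + -(k : ℤ) by ring, hIter_add, hIter_add,
        hIter_neg_one, hIter_neg_one, conj_symm_apply S T h hc, ih]

lemma conj_gsN (S : SmaleSpace X) (T : SmaleSpace Y) (h : X ≃ₜ Y)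
    (hc : ∀ x, h (S.phi x) = T.phi (h x)) :
    ∃ m : ℕ, ∀ (N : ℕ) (p : X × X), p ∈ S.GsN N → (h p.1, h p.2) ∈ T.GsN ((N : ℤ) + m) := by
  obtain ⟨δT, hδTpos, hδT⟩ := T.stable_criterion
  have huc : UniformContinuous (h : X → Y) :=
    CompactSpace.uniformContinuous_of_continuous h.continuous
  rw [Metric.uniformContinuous_iff] at huc
  obtain ⟨δX, hδXpos, hδX⟩ := huc δT hδTpos
  obtain ⟨m, hm⟩ : ∃ m : ℕ, S.lam ^ m * S.eps < δX := by
    have ht : Filter.Tendsto (fun n : ℕ => S.lam ^ n * S.eps) Filter.atTop (nhds 0) := by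
      simpa using (tendsto_pow_atTop_nhds_zero_of_lt_one S.lam_pos.le S.lam_lt_one).mul_const
        S.eps
    obtain ⟨m, hm⟩ := (ht.eventually_lt_const hδXpos).exists
    exact ⟨m, hm⟩
  refine ⟨m, fun N p hp => ?_⟩
  -- the pair at time N + m in Y satisfies the criterion
  have key : ∀ n : ℕ,
      dist (hIter T.phi n (hIter T.phi ((N : ℤ) + m) (h p.1)))
        (hIter T.phi n (hIter T.phi ((N : ℤ) + m) (h p.2))) ≤ δT := by
    intro n
    rw [hIter_comp, hIter_comp, ← conj_hIter S T h hc, ← conj_hIter S T h hc]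
    have hd : dist (hIter S.phi ((n : ℤ) + ((N : ℤ) + m)) p.1)
        (hIter S.phi ((n : ℤ) + ((N : ℤ) + m)) p.2) < δX := by
      have htail := S.gsN_tail hp (m + n)
      rw [show ((N : ℤ) + ((m + n : ℕ) : ℤ)) = (n : ℤ) + ((N : ℤ) + m) by push_cast; ring]
        at htail
      refine htail.trans_lt (lt_of_le_of_lt ?_ hm)
      apply mul_le_mul_of_nonneg_right _ S.eps_pos.le
      exact pow_le_pow_of_le_one S.lam_pos.le S.lam_lt_one.le (by omega)
    exact (hδX hd).le
  have := hδT _ _ key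
  exact this

lemma conj_gaN (S : SmaleSpace X) (T : SmaleSpace Y) (h : X ≃ₜ Y)
    (hc : ∀ x, h (S.phi x) = T.phi (h x)) :
    ∃ m : ℕ, ∀ (N : ℕ) (p : X × X), p ∈ S.GaN N → (h p.1, h p.2) ∈ T.GaN ((N : ℤ) + m) := by
  obtain ⟨m1, hm1⟩ := conj_gsN S T h hc
  have hc' : ∀ x, h ((rev S).phi x) = (rev T).phi (h x) := fun x =>
    conj_symm_apply S T h hc x
  obtain ⟨m2, hm2⟩ := conj_gsN (rev S) (rev T) h hc'
  refine ⟨max m1 m2, fun N p hp => ?_⟩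
  constructor
  · have h1 := hm1 N p hp.1
    have : T.GsN ((N : ℤ) + m1) ⊆ T.GsN ((N : ℤ) + max m1 m2) := by
      have := T.gsN_mono (n := N + m1) (m := N + max m1 m2) (by omega)
      rwa [show ((N + m1 : ℕ) : ℤ) = (N : ℤ) + m1 by push_cast; ring,
        show ((N + max m1 m2 : ℕ) : ℤ) = (N : ℤ) + max m1 m2 by push_cast; ring] at this
    exact this h1
  · have hpu : p ∈ (rev S).GsN N := by rw [S.rev_GsN]; exact hp.2
    have h2 := hm2 N p hpu
    rw [T.rev_GsN] at h2
    have : T.GuN ((N : ℤ) + m2) ⊆ T.GuN ((N : ℤ) + max m1 m2) := by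
      have := T.guN_mono (n := N + m2) (m := N + max m1 m2) (by omega)
      rwa [show ((N + m2 : ℕ) : ℤ) = (N : ℤ) + m2 by push_cast; ring,
        show ((N + max m1 m2 : ℕ) : ℤ) = (N : ℤ) + max m1 m2 by push_cast; ring] at this
    exact this h2

end SmaleSpace

namespace SmaleSpace

variable {X Y : Type*} [MetricSpace X] [CompactSpace X] [MetricSpace Y] [CompactSpace Y]

lemma rev_hIter (S : SmaleSpace X) (z : ℤ) (x : X) :
    hIter (rev S).phi z x = hIter S.phi (-z) x := hIter_symm S.phi z x

lemma gaN_open_in (S : SmaleSpace X) {N M : ℕ} (hNM : N ≤ M) :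
    ∃ O : Set (X × X), IsOpen O ∧ S.GaN N = O ∩ S.GaN M := by
  obtain ⟨δs, hδspos, hs⟩ := S.stable_criterion'
  obtain ⟨δu, hδupos, hu⟩ := (rev S).stable_criterion'
  obtain ⟨m, hm⟩ : ∃ m : ℕ, S.lam ^ m * S.eps < min δs δu := by
    have ht : Filter.Tendsto (fun n : ℕ => S.lam ^ n * S.eps) Filter.atTop (nhds 0) := by
      simpa using (tendsto_pow_atTop_nhds_zero_of_lt_one S.lam_pos.le S.lam_lt_one).mul_const
        S.eps
    exact (ht.eventually_lt_const (lt_min hδspos hδupos)).exists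
  set n0 : ℕ := (M - N) + m with hn0
  set O : Set (X × X) := {p : X × X | ∀ n : ℕ, n ≤ n0 →
    dist (hIter S.phi ((N : ℤ) + n) p.1) (hIter S.phi ((N : ℤ) + n) p.2) < S.eps ∧
    dist (hIter S.phi (-((N : ℤ) + n)) p.1) (hIter S.phi (-((N : ℤ) + n)) p.2) < S.eps}
    with hO
  have hOopen : IsOpen O := by
    have : O = ⋂ n ∈ Finset.range (n0 + 1),
        ({p : X × X | dist (hIter S.phi ((N : ℤ) + n) p.1)
            (hIter S.phi ((N : ℤ) + n) p.2) < S.eps} ∩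
          {p : X × X | dist (hIter S.phi (-((N : ℤ) + n)) p.1)
            (hIter S.phi (-((N : ℤ) + n)) p.2) < S.eps}) := by
      ext p
      simp only [hO, Set.mem_setOf_eq, Set.mem_iInter, Finset.mem_range, Nat.lt_succ_iff,
        Set.mem_inter_iff]
    rw [this]
    apply isOpen_biInter_finset
    intro n _
    apply IsOpen.inter
    · exact isOpen_lt (Continuous.dist
        ((continuous_hIter S.phi _).comp continuous_fst)
        ((continuous_hIter S.phi _).comp continuous_snd)) continuous_const
    · exact isOpen_lt (Continuous.dist
        ((continuous_hIter S.phi _).comp continuous_fst)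
        ((continuous_hIter S.phi _).comp continuous_snd)) continuous_const
  refine ⟨O, hOopen, ?_⟩
  apply Set.Subset.antisymm
  · -- GaN N ⊆ O ∩ GaN M
    intro p hp
    refine ⟨?_, S.gaN_mono hNM hp⟩
    intro n _
    constructor
    · have h2 := (S.gs0_iter hp.1 n).2
      have e : ∀ x : X, hIter S.phi (n : ℤ) (hIter S.phi N x) = hIter S.phi ((N : ℤ) + n) x := by
        intro x; rw [hIter_comp]; all_goals (congr 1; omega)
      rw [e, e] at h2
      have hl : S.lam ^ n ≤ 1 := pow_le_one₀ S.lam_pos.le S.lam_lt_one.le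
      calc dist (hIter S.phi ((N : ℤ) + n) p.1) (hIter S.phi ((N : ℤ) + n) p.2)
          ≤ S.lam ^ n * dist (hIter S.phi N p.1) (hIter S.phi N p.2) := h2
        _ ≤ 1 * dist (hIter S.phi N p.1) (hIter S.phi N p.2) :=
            mul_le_mul_of_nonneg_right hl dist_nonneg
        _ < S.eps := by rw [one_mul]; exact hp.1.2
    · have hpu : ((hIter S.phi (-(N : ℤ)) p.1, hIter S.phi (-(N : ℤ)) p.2) : X × X)
          ∈ (rev S).Gs0 := hp.2
      have h2 := ((rev S).gs0_iter hpu n).2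
      have e : ∀ x : X, hIter (rev S).phi (n : ℤ) (hIter S.phi (-(N : ℤ)) x) =
          hIter S.phi (-((N : ℤ) + n)) x := by
        intro x; rw [rev_hIter, hIter_comp]; all_goals (congr 1; omega)
      rw [e, e] at h2
      have hl : S.lam ^ n ≤ 1 := pow_le_one₀ S.lam_pos.le S.lam_lt_one.le
      calc dist (hIter S.phi (-((N : ℤ) + n)) p.1) (hIter S.phi (-((N : ℤ) + n)) p.2)
          ≤ S.lam ^ n * dist (hIter S.phi (-(N : ℤ)) p.1) (hIter S.phi (-(N : ℤ)) p.2) := h2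
        _ ≤ 1 * dist (hIter S.phi (-(N : ℤ)) p.1) (hIter S.phi (-(N : ℤ)) p.2) :=
            mul_le_mul_of_nonneg_right hl dist_nonneg
        _ < S.eps := by rw [one_mul]; exact hp.2.2
  · -- O ∩ GaN M ⊆ GaN N
    rintro p ⟨hpO, hpM⟩
    constructor
    · -- stable part
      apply hs n0 (hIter S.phi N p.1) (hIter S.phi N p.2)
      · intro n hn
        have := (hpO n hn).1
        have e : ∀ x : X, hIter S.phi (n : ℤ) (hIter S.phi N x) =
            hIter S.phi ((N : ℤ) + n) x := by
          intro x; rw [hIter_comp]; all_goals (congr 1; omega)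
        rwa [e, e]
      · intro n hn
        set k : ℕ := n + N - M with hk
        have hkm : m ≤ k := by omega
        have htail := S.gsN_tail hpM.1 k
        have e : ∀ x : X, hIter S.phi (n : ℤ) (hIter S.phi N x) =
            hIter S.phi ((M : ℤ) + k) x := by
          intro x; rw [hIter_comp]; congr 1; omega
        rw [e, e]
        refine htail.trans ?_
        have : S.lam ^ k * S.eps ≤ S.lam ^ m * S.eps :=
          mul_le_mul_of_nonneg_right
            (pow_le_pow_of_le_one S.lam_pos.le S.lam_lt_one.le hkm) S.eps_pos.le
        have h2 : S.lam ^ m * S.eps ≤ δs := (le_min_iff.mp hm.le).1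
        linarith
    · -- unstable part
      have goal : ((hIter S.phi (-(N : ℤ)) p.1, hIter S.phi (-(N : ℤ)) p.2) : X × X)
          ∈ (rev S).Gs0 := by
        apply hu n0 (hIter S.phi (-(N : ℤ)) p.1) (hIter S.phi (-(N : ℤ)) p.2)
        · intro n hn
          have := (hpO n hn).2
          have e : ∀ x : X, hIter (rev S).phi (n : ℤ) (hIter S.phi (-(N : ℤ)) x) =
              hIter S.phi (-((N : ℤ) + n)) x := by
            intro x; rw [rev_hIter, hIter_comp]; all_goals (congr 1; omega)
          rwa [e, e]
        · intro n hn
          set k : ℕ := n + N - M with hk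
          have hkm : m ≤ k := by omega
          have hpuM : p ∈ (rev S).GsN M := by rw [S.rev_GsN]; exact hpM.2
          have htail := (rev S).gsN_tail hpuM k
          have e : ∀ x : X, hIter (rev S).phi (n : ℤ) (hIter S.phi (-(N : ℤ)) x) =
              hIter (rev S).phi ((M : ℤ) + k) x := by
            intro x; rw [rev_hIter, rev_hIter, hIter_comp]; congr 1; omega
          rw [e, e]
          refine htail.trans ?_
          show S.lam ^ k * S.eps ≤ δu
          have : S.lam ^ k * S.eps ≤ S.lam ^ m * S.eps :=
            mul_le_mul_of_nonneg_right
              (pow_le_pow_of_le_one S.lam_pos.le S.lam_lt_one.le hkm) S.eps_pos.le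
          have h2 : S.lam ^ m * S.eps ≤ δu := (le_min_iff.mp hm.le).2
          linarith
      exact goal

end SmaleSpace

/-- For a flip conjugacy `h`, the map `η(x,z) = (h(x),h(z))` maps each
`G_φ^{a,N}` into some `G_ψ^{a,N'}` with open image in the subspace topology of
`G_ψ^{a,N'}`; in particular `η(G_φ^a) ⊆ G_ψ^a`. -/
theorem flipConjugacy_gaN_image_open {X Y : Type*} [MetricSpace X] [CompactSpace X]
    [MetricSpace Y] [CompactSpace Y] (S : SmaleSpace X) (T : SmaleSpace Y)
    (h : X ≃ₜ Y) (hflip : SmaleSpace.IsFlipConjugacy S T h) :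
    (∀ N : ℕ, ∃ N' : ℕ,
      ((fun p : X × X => (h p.1, h p.2)) '' S.GaN (N : ℤ) ⊆ T.GaN (N' : ℤ)) ∧
      IsOpen {q : ↥(T.GaN (N' : ℤ)) |
        (q : Y × Y) ∈ (fun p : X × X => (h p.1, h p.2)) '' S.GaN (N : ℤ)}) ∧
    (fun p : X × X => (h p.1, h p.2)) '' S.Ga ⊆ T.Ga := by
  classical
  open SmaleSpace in
  obtain ⟨m1, hm1, m2, hm2⟩ :
      ∃ m1 : ℕ, (∀ (N : ℕ) (p : X × X), p ∈ S.GaN N → (h p.1, h p.2) ∈ T.GaN ((N : ℤ) + m1)) ∧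
      ∃ m2 : ℕ, ∀ (N : ℕ) (q : Y × Y), q ∈ T.GaN N →
        (h.symm q.1, h.symm q.2) ∈ S.GaN ((N : ℤ) + m2) := by
    rcases hflip with hc | hc
    · obtain ⟨m1, hm1⟩ := SmaleSpace.conj_gaN S T h hc
      have hcsymm : ∀ y, h.symm (T.phi y) = S.phi (h.symm y) := by
        intro y
        apply h.injective
        rw [hc, Homeomorph.apply_symm_apply, Homeomorph.apply_symm_apply]
      obtain ⟨m2, hm2⟩ := SmaleSpace.conj_gaN T S h.symm hcsymm
      exact ⟨m1, hm1, m2, hm2⟩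
    · have hc' : ∀ x, h (S.phi x) = (SmaleSpace.rev T).phi (h x) := hc
      obtain ⟨m1, hm1⟩ := SmaleSpace.conj_gaN S (SmaleSpace.rev T) h hc'
      have hcsymm : ∀ y, h.symm ((SmaleSpace.rev T).phi y) = S.phi (h.symm y) := by
        intro y
        apply h.injective
        rw [hc, Homeomorph.apply_symm_apply, Homeomorph.apply_symm_apply]
        rfl
      obtain ⟨m2, hm2⟩ := SmaleSpace.conj_gaN (SmaleSpace.rev T) S h.symm hcsymm
      refine ⟨m1, fun N p hp => ?_, m2, fun N q hq => ?_⟩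
      · have := hm1 N p hp
        rwa [SmaleSpace.rev_GaN] at this
      · exact hm2 N q (by rwa [SmaleSpace.rev_GaN])
  constructor
  · intro N
    refine ⟨N + m1, ?_, ?_⟩
    · rintro q ⟨p, hp, rfl⟩
      have := hm1 N p hp
      rwa [show ((N : ℤ) + m1) = ((N + m1 : ℕ) : ℤ) by push_cast; ring] at this
    · -- openness
      set M : ℕ := N + m1 + m2 with hM
      obtain ⟨O, hOopen, hOeq⟩ := S.gaN_open_in (N := N) (M := M) (by omega)
      set k : Y × Y → X × X := fun q => (h.symm q.1, h.symm q.2) with hk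
      have hkcont : Continuous k :=
        (h.symm.continuous.comp continuous_fst).prodMk (h.symm.continuous.comp continuous_snd)
      have hset : {q : ↥(T.GaN ((N + m1 : ℕ) : ℤ)) |
          (q : Y × Y) ∈ (fun p : X × X => (h p.1, h p.2)) '' S.GaN (N : ℤ)} =
          Subtype.val ⁻¹' (k ⁻¹' O) := by
        ext q
        simp only [Set.mem_setOf_eq, Set.mem_preimage]
        constructor
        · rintro ⟨p, hp, hpq⟩
          have hkq : k (q : Y × Y) = p := by
            rw [← hpq]
            simp [hk]
          rw [hkq]
          have := hOeq ▸ hp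
          exact this.1
        · intro hq
          have hqM : k (q : Y × Y) ∈ S.GaN (M : ℤ) := by
            have := hm2 (N + m1) (q : Y × Y) q.2
            rwa [show (((N + m1 : ℕ) : ℤ) + m2) = ((M : ℕ) : ℤ) by rw [hM]; push_cast; ring]
              at this
          have hmem : k (q : Y × Y) ∈ S.GaN (N : ℤ) := by
            rw [hOeq]; exact ⟨hq, hqM⟩
          refine ⟨k (q : Y × Y), hmem, ?_⟩
          simp [hk]
      rw [hset]
      exact (hOopen.preimage hkcont).preimage continuous_subtype_val
  · rintro q ⟨p, hp, rfl⟩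
    rw [SmaleSpace.Ga, Set.mem_iUnion] at hp ⊢
    obtain ⟨n, hn⟩ := hp
    refine ⟨n + m1, ?_⟩
    have := hm1 n p hn
    rwa [show ((n : ℤ) + m1) = ((n + m1 : ℕ) : ℤ) by push_cast; ring] at this
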